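/- Let 0 < d < 1/2, a > 0, h > 0, and define g : ℝ → ℝ periodic with period 2h by g = a on [0, dh), g = −a on [h, h + dh), and g = 0 elsewhere in [0, 2h). Let t = h/2. Then the function y ↦ (1/t)∫₀ᵗ g(y+s) ds on [0, 2h) attains the value 2ad on a set of Lebesgue measure at least 2h(1/4 − d/2) − 2dh, attains the value −2ad on a set of the same lower-bound measure, equals 0 on a set of measure at least 2h(1/2 − d) − 2dh, and is everywhere bounded in absolute value by 2ad. -/

import Mathlib

open MeasureTheory Set

set_option maxHeartbeats 1000000

private lemma ae_eq_const_aux {g : ℝ → ℝ} {u v c : ℝ} (huv : u ≤ v)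
    (hg : ∀ x, u < x → x < v → g x = c) :
    g =ᵐ[volume.restrict (Set.uIoc u v)] (fun _ => c) := by
  rw [Set.uIoc_of_le huv, Filter.EventuallyEq, ae_restrict_iff' measurableSet_Ioc]
  filter_upwards [compl_mem_ae_iff.2 (measure_singleton v)] with x hx hxI
  simp only [Set.mem_compl_iff, Set.mem_singleton_iff] at hx
  exact hg x hxI.1 (lt_of_le_of_ne hxI.2 hx)

private lemma ii_const_aux {g : ℝ → ℝ} {u v c : ℝ} (huv : u ≤ v)
    (hg : ∀ x, u < x → x < v → g x = c) :
    IntervalIntegrable g volume u v :=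
  (intervalIntegrable_const (c := c)).congr_ae (ae_eq_const_aux huv hg).symm

private lemma int_const_aux {g : ℝ → ℝ} {u v c : ℝ} (huv : u ≤ v)
    (hg : ∀ x, u < x → x < v → g x = c) :
    ∫ x in u..v, g x = c * (v - u) := by
  have h1 : ∫ x in u..v, g x = ∫ x in u..v, (fun _ => c) x :=
    intervalIntegral.integral_congr_ae <| by
      filter_upwards [compl_mem_ae_iff.2 (measure_singleton v)] with x hx hxI
      rw [Set.uIoc_of_le huv] at hxI
      simp only [Set.mem_compl_iff, Set.mem_singleton_iff] at hx
      exact hg x hxI.1 (lt_of_le_of_ne hxI.2 hx)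
  rw [h1, intervalIntegral.integral_const, smul_eq_mul]; ring

private lemma int_piece {g : ℝ → ℝ} {u m₁ m₂ v c : ℝ}
    (h1 : u ≤ m₁) (h2 : m₁ ≤ m₂) (h3 : m₂ ≤ v)
    (hz1 : ∀ x, u < x → x < m₁ → g x = 0)
    (hc : ∀ x, m₁ < x → x < m₂ → g x = c)
    (hz2 : ∀ x, m₂ < x → x < v → g x = 0) :
    ∫ x in u..v, g x = c * (m₂ - m₁) := by
  have i1 := ii_const_aux h1 hz1
  have i2 := ii_const_aux h2 hc
  have i3 := ii_const_aux h3 hz2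
  rw [← intervalIntegral.integral_add_adjacent_intervals (i1.trans i2) i3,
    ← intervalIntegral.integral_add_adjacent_intervals i1 i2,
    int_const_aux h1 hz1, int_const_aux h2 hc, int_const_aux h3 hz2]
  ring

private lemma abs_avg_le {a d h c L : ℝ} (ha : 0 < a) (hh : 0 < h) (hd : 0 < d)
    (hc : |c| ≤ a) (hL0 : 0 ≤ L) (hL : L ≤ d * h) :
    |(1/(h/2)) * (c * L)| ≤ 2 * a * d := by
  rw [abs_mul, abs_mul, abs_of_nonneg hL0]
  have h1 : |1/(h/2)| = 2/h := by
    rw [abs_of_pos (by positivity)]; field_simp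
  rw [h1, div_mul_eq_mul_div, div_le_iff₀ hh]
  nlinarith [abs_nonneg c, mul_nonneg (sub_nonneg.2 hc) hL0,
    mul_le_mul_of_nonneg_left hL ha.le]

/-- Distribution of the Birkhoff averages of the rectangle function at time a quarter
period: the average attains `±2ad` each on sets of measure close to a quarter of the
period, vanishes on a set of measure close to half the period, and is bounded by `2ad`. -/
theorem stmt_7 (d a h : ℝ) (hd0 : 0 < d) (hd : d < 1/2) (ha : 0 < a) (hh : 0 < h)
    (g : ℝ → ℝ)
    (hper : Function.Periodic g (2 * h))
    (hgdef : ∀ s ∈ Set.Ico (0:ℝ) (2 * h),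
      g s = if s < d * h then a else if h ≤ s ∧ s < h + d * h then -a else 0) :
    (volume {y ∈ Set.Ico (0:ℝ) (2 * h) |
        (1/(h/2)) * ∫ s in (0:ℝ)..(h/2), g (y + s) = 2 * a * d} ≥
      ENNReal.ofReal (2 * h * (1/4 - d/2) - 2 * d * h)) ∧
    (volume {y ∈ Set.Ico (0:ℝ) (2 * h) |
        (1/(h/2)) * ∫ s in (0:ℝ)..(h/2), g (y + s) = -(2 * a * d)} ≥
      ENNReal.ofReal (2 * h * (1/4 - d/2) - 2 * d * h)) ∧
    (volume {y ∈ Set.Ico (0:ℝ) (2 * h) |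
        (1/(h/2)) * ∫ s in (0:ℝ)..(h/2), g (y + s) = 0} ≥
      ENNReal.ofReal (2 * h * (1/2 - d) - 2 * d * h)) ∧
    ∀ y : ℝ, |(1/(h/2)) * ∫ s in (0:ℝ)..(h/2), g (y + s)| ≤ 2 * a * d := by
  have hdh : 0 < d * h := by positivity
  have hdh2 : d * h < h / 2 := by nlinarith
  -- basic values of g on [0, 3h)
  have hga : ∀ x, 0 ≤ x → x < d * h → g x = a := by
    intro x h0 h1
    rw [hgdef x ⟨h0, by nlinarith⟩, if_pos h1]
  have hgb : ∀ x, h ≤ x → x < h + d * h → g x = -a := by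
    intro x h0 h1
    rw [hgdef x ⟨by linarith, by nlinarith⟩, if_neg (by push_neg; nlinarith),
      if_pos ⟨h0, h1⟩]
  have hz1 : ∀ x, d * h ≤ x → x < h → g x = 0 := by
    intro x h0 h1
    rw [hgdef x ⟨by linarith, by nlinarith⟩, if_neg (by push_neg; linarith),
      if_neg (by push_neg; intro hx; linarith)]
  have hz2 : ∀ x, h + d * h ≤ x → x < 2 * h → g x = 0 := by
    intro x h0 h1
    rw [hgdef x ⟨by nlinarith, h1⟩, if_neg (by push_neg; nlinarith),
      if_neg (by push_neg; intro hx; linarith)]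
  have hshift : ∀ x : ℝ, g x = g (x - 2 * h) := by
    intro x; rw [← hper (x - 2 * h)]; ring_nf
  have hga2 : ∀ x, 2 * h ≤ x → x < 2 * h + d * h → g x = a := by
    intro x h0 h1
    rw [hshift x]; exact hga _ (by linarith) (by linarith)
  have hz3 : ∀ x, 2 * h + d * h ≤ x → x < 3 * h → g x = 0 := by
    intro x h0 h1
    rw [hshift x]; exact hz1 _ (by linarith) (by linarith)
  -- integral as integral over window
  have hwin : ∀ y : ℝ, (∫ s in (0:ℝ)..(h/2), g (y + s)) = ∫ x in y..(y + h/2), g x := by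
    intro y
    have := intervalIntegral.integral_comp_add_left (a := (0:ℝ)) (b := h/2) g y
    rw [this, add_zero]
  refine ⟨?_, ?_, ?_, ?_⟩
  · -- value 2ad on [3h/2 + dh, 2h)
    have hsub : Set.Ico (3*h/2 + d*h) (2*h) ⊆ {y ∈ Set.Ico (0:ℝ) (2 * h) |
        (1/(h/2)) * ∫ s in (0:ℝ)..(h/2), g (y + s) = 2 * a * d} := by
      intro y ⟨hy1, hy2⟩
      refine ⟨⟨by nlinarith, hy2⟩, ?_⟩
      rw [hwin y, int_piece (m₁ := 2*h) (m₂ := 2*h + d*h) (c := a)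
        hy2.le (by linarith) (by nlinarith)
        (fun x hx1 hx2 => hz2 x (by nlinarith) hx2)
        (fun x hx1 hx2 => hga2 x hx1.le hx2)
        (fun x hx1 hx2 => hz3 x hx1.le (by nlinarith))]
      field_simp; ring
    calc volume _ ≥ volume (Set.Ico (3*h/2 + d*h) (2*h)) := measure_mono hsub
      _ = ENNReal.ofReal (2*h - (3*h/2 + d*h)) := Real.volume_Ico
      _ ≥ _ := ENNReal.ofReal_le_ofReal (by nlinarith)
  · -- value -2ad on [h/2 + dh, h)
    have hsub : Set.Ico (h/2 + d*h) h ⊆ {y ∈ Set.Ico (0:ℝ) (2 * h) |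
        (1/(h/2)) * ∫ s in (0:ℝ)..(h/2), g (y + s) = -(2 * a * d)} := by
      intro y ⟨hy1, hy2⟩
      refine ⟨⟨by nlinarith, by linarith⟩, ?_⟩
      rw [hwin y, int_piece (m₁ := h) (m₂ := h + d*h) (c := -a)
        hy2.le (by linarith) (by nlinarith)
        (fun x hx1 hx2 => hz1 x (by nlinarith) hx2)
        (fun x hx1 hx2 => hgb x hx1.le hx2)
        (fun x hx1 hx2 => hz2 x hx1.le (by nlinarith))]
      field_simp; ring
    calc volume _ ≥ volume (Set.Ico (h/2 + d*h) h) := measure_mono hsub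
      _ = ENNReal.ofReal (h - (h/2 + d*h)) := Real.volume_Ico
      _ ≥ _ := ENNReal.ofReal_le_ofReal (by nlinarith)
  · -- value 0 on [dh, h/2) ∪ [h + dh, 3h/2)
    have hsub : Set.Ico (d*h) (h/2) ∪ Set.Ico (h + d*h) (3*h/2) ⊆
        {y ∈ Set.Ico (0:ℝ) (2 * h) |
        (1/(h/2)) * ∫ s in (0:ℝ)..(h/2), g (y + s) = 0} := by
      rintro y (⟨hy1, hy2⟩ | ⟨hy1, hy2⟩)
      · refine ⟨⟨by linarith, by linarith⟩, ?_⟩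
        rw [hwin y, int_const_aux (by linarith)
          (fun x hx1 hx2 => hz1 x (by linarith) (by nlinarith))]
        ring
      · refine ⟨⟨by nlinarith, by linarith⟩, ?_⟩
        rw [hwin y, int_const_aux (by linarith)
          (fun x hx1 hx2 => hz2 x (by linarith) (by nlinarith))]
        ring
    have hdisj : Disjoint (Set.Ico (d*h) (h/2)) (Set.Ico (h + d*h) (3*h/2)) := by
      rw [Set.Ico_disjoint_Ico]
      exact le_trans (min_le_left _ _) (le_trans (by linarith) (le_max_right _ _))
    calc volume _ ≥ volume (Set.Ico (d*h) (h/2) ∪ Set.Ico (h + d*h) (3*h/2)) :=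
        measure_mono hsub
      _ = ENNReal.ofReal (h/2 - d*h) + ENNReal.ofReal (3*h/2 - (h + d*h)) := by
        rw [measure_union hdisj measurableSet_Ico, Real.volume_Ico, Real.volume_Ico]
      _ = ENNReal.ofReal ((h/2 - d*h) + (3*h/2 - (h + d*h))) :=
        (ENNReal.ofReal_add (by linarith) (by linarith)).symm
      _ ≥ _ := ENNReal.ofReal_le_ofReal (by nlinarith)
  · -- bound
    intro y
    have hFper : Function.Periodic
        (fun y => (1/(h/2)) * ∫ s in (0:ℝ)..(h/2), g (y + s)) (2 * h) := by
      intro x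
      simp only
      congr 1
      apply intervalIntegral.integral_congr
      intro s _
      simp only
      rw [show x + 2*h + s = x + s + 2*h by ring, hper (x + s)]
    obtain ⟨z, hz, heq⟩ := hFper.exists_mem_Ico₀ (by linarith) y
    rw [heq, hwin z]
    obtain ⟨hz0, hz2h⟩ := hz
    have haa : |a| ≤ a := by rw [abs_of_pos ha]
    have hna : |(-a)| ≤ a := by rw [abs_neg, abs_of_pos ha]
    rcases lt_or_ge z (d*h) with c1 | c1
    · -- window starts inside first block
      rw [int_piece (m₁ := z) (m₂ := d*h) (c := a) le_rfl c1.le (by nlinarith)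
        (fun x hx1 hx2 => absurd hx1 (not_lt.2 hx2.le))
        (fun x hx1 hx2 => hga x (by linarith) hx2)
        (fun x hx1 hx2 => hz1 x hx1.le (by nlinarith))]
      exact abs_avg_le ha hh hd0 haa (by linarith) (by linarith)
    rcases le_or_gt (z + h/2) h with c2 | c2
    · -- window in first zero region
      rw [int_const_aux (c := 0) (by linarith)
        (fun x hx1 hx2 => hz1 x (by linarith) (by linarith))]
      simp only [zero_mul, mul_zero, abs_zero]
      positivity
    rcases lt_or_ge z (h/2 + d*h) with c3 | c3
    · -- window ends inside second block
      rw [int_piece (m₁ := h) (m₂ := z + h/2) (c := -a) (by linarith) c2.le le_rfl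
        (fun x hx1 hx2 => hz1 x (by nlinarith) hx2)
        (fun x hx1 hx2 => hgb x hx1.le (by linarith))
        (fun x hx1 hx2 => absurd hx1 (not_lt.2 hx2.le))]
      exact abs_avg_le ha hh hd0 hna (by linarith) (by linarith)
    rcases le_or_gt z h with c4 | c4
    · -- window contains second block
      rw [int_piece (m₁ := h) (m₂ := h + d*h) (c := -a) c4 (by linarith) (by linarith)
        (fun x hx1 hx2 => hz1 x (by nlinarith) hx2)
        (fun x hx1 hx2 => hgb x hx1.le hx2)
        (fun x hx1 hx2 => hz2 x hx1.le (by nlinarith))]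
      exact abs_avg_le ha hh hd0 hna (by linarith) (by linarith)
    rcases lt_or_ge z (h + d*h) with c5 | c5
    · -- window starts inside second block
      rw [int_piece (m₁ := z) (m₂ := h + d*h) (c := -a) le_rfl c5.le (by nlinarith)
        (fun x hx1 hx2 => absurd hx1 (not_lt.2 hx2.le))
        (fun x hx1 hx2 => hgb x (by linarith) hx2)
        (fun x hx1 hx2 => hz2 x hx1.le (by nlinarith))]
      exact abs_avg_le ha hh hd0 hna (by linarith) (by linarith)
    rcases le_or_gt (z + h/2) (2*h) with c6 | c6
    · -- window in second zero region
      rw [int_const_aux (c := 0) (by linarith)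
        (fun x hx1 hx2 => hz2 x (by linarith) (by linarith))]
      simp only [zero_mul, mul_zero, abs_zero]
      positivity
    rcases lt_or_ge z (3*h/2 + d*h) with c7 | c7
    · -- window ends inside third block
      rw [int_piece (m₁ := 2*h) (m₂ := z + h/2) (c := a) (by linarith) c6.le le_rfl
        (fun x hx1 hx2 => hz2 x (by nlinarith) hx2)
        (fun x hx1 hx2 => hga2 x hx1.le (by linarith))
        (fun x hx1 hx2 => absurd hx1 (not_lt.2 hx2.le))]
      exact abs_avg_le ha hh hd0 haa (by linarith) (by linarith)
    · -- window contains third block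
      rw [int_piece (m₁ := 2*h) (m₂ := 2*h + d*h) (c := a) hz2h.le (by linarith)
        (by nlinarith)
        (fun x hx1 hx2 => hz2 x (by nlinarith) hx2)
        (fun x hx1 hx2 => hga2 x hx1.le hx2)
        (fun x hx1 hx2 => hz3 x hx1.le (by nlinarith))]
      exact abs_avg_le ha hh hd0 haa (by linarith) (by linarith)
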